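/- As x → ∞, one has lim_{x→∞} x · e^{−x}·g(x)/(1 − e^{−x}) = 1; that is, the quantity h¹(x) = e^{−x}g(x)/(1 − e^{−x}) is asymptotically equal to 1/x. -/

import Mathlib

open Real Filter
open MeasureTheory intervalIntegral

/-- `g x = ∫_0^x (e^z − 1)/z dz`, with the integrand extended continuously
by the value `1` at `z = 0`. -/
noncomputable def g (x : ℝ) : ℝ :=
  ∫ z in (0:ℝ)..x, if z = 0 then 1 else (Real.exp z - 1) / z

lemma contFI : Continuous (fun z : ℝ => if z = 0 then 1 else (Real.exp z - 1) / z) := by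
  rw [continuous_iff_continuousAt]
  intro x
  rcases eq_or_ne x 0 with rfl | hx
  · rw [← continuousWithinAt_compl_self]
    have h := hasDerivAt_iff_tendsto_slope.mp (Real.hasDerivAt_exp 0)
    rw [Real.exp_zero] at h
    show Tendsto _ _ (nhds ((fun z : ℝ => if z = 0 then 1 else (Real.exp z - 1) / z) 0))
    simp only [if_pos rfl]
    refine Tendsto.congr' ?_ h
    filter_upwards [self_mem_nhdsWithin] with z hz
    simp only [Set.mem_compl_iff, Set.mem_singleton_iff] at hz
    simp [slope, hz, Real.exp_zero, div_eq_inv_mul]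
  · have : ContinuousAt (fun z : ℝ => (Real.exp z - 1) / z) x :=
      (Real.continuous_exp.continuousAt.sub continuousAt_const).div continuousAt_id hx
    refine this.congr ?_
    filter_upwards [isOpen_compl_singleton.mem_nhds hx] with z hz
    simp only [Set.mem_compl_iff, Set.mem_singleton_iff] at hz
    simp [hz]

lemma contOn_exp_div {s : Set ℝ} (hs : ∀ z ∈ s, z ≠ 0) :
    ContinuousOn (fun z : ℝ => Real.exp z / z) s :=
  Real.continuous_exp.continuousOn.div continuous_id.continuousOn hs

lemma g_eq_aux {x : ℝ} (hx : 1 ≤ x) :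
    g x = g 1 + (∫ z in (1:ℝ)..x, Real.exp z / z) - Real.log x := by
  have hint : ∀ a b : ℝ, IntervalIntegrable
      (fun z : ℝ => if z = 0 then 1 else (Real.exp z - 1) / z) volume a b :=
    fun a b => contFI.intervalIntegrable a b
  have hadj : g 1 + (∫ z in (1:ℝ)..x, if z = 0 then 1 else (Real.exp z - 1) / z) = g x :=
    integral_add_adjacent_intervals (hint 0 1) (hint 1 x)
  have huIcc : Set.uIcc (1:ℝ) x = Set.Icc 1 x := Set.uIcc_of_le hx
  have hpos : ∀ z ∈ Set.uIcc (1:ℝ) x, (0:ℝ) < z := by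
    rw [huIcc]; intro z hz; linarith [hz.1]
  have hcongr : (∫ z in (1:ℝ)..x, if z = 0 then 1 else (Real.exp z - 1) / z)
      = ∫ z in (1:ℝ)..x, (Real.exp z / z - 1 / z) := by
    apply integral_congr
    intro z hz
    have h0 := (hpos z hz).ne'
    simp [h0, sub_div]
  have hi1 : IntervalIntegrable (fun z : ℝ => Real.exp z / z) volume 1 x :=
    (contOn_exp_div fun z hz => (hpos z hz).ne').intervalIntegrable
  have hi2 : IntervalIntegrable (fun z : ℝ => 1 / z) volume 1 x :=
    ((continuous_const.continuousOn).div continuous_id.continuousOn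
      fun z hz => (hpos z hz).ne').intervalIntegrable
  have hsub : (∫ z in (1:ℝ)..x, (Real.exp z / z - 1 / z))
      = (∫ z in (1:ℝ)..x, Real.exp z / z) - ∫ z in (1:ℝ)..x, 1 / z :=
    integral_sub hi1 hi2
  have hlog : (∫ z in (1:ℝ)..x, 1 / z) = Real.log x := by
    rw [integral_one_div]
    · simp
    · rw [huIcc]; intro h; linarith [h.1]
  rw [← hadj, hcongr, hsub, hlog]; ring

lemma E_upper {x : ℝ} (hx1 : 1 ≤ x) (hs1 : 1 ≤ x - 2 * Real.log x) :
    (∫ z in (1:ℝ)..x, Real.exp z / z) ≤ Real.exp x / x ^ 2 + Real.exp x / (x - 2 * Real.log x) := by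
  set s := x - 2 * Real.log x with hs
  have hx0 : (0:ℝ) < x := by linarith
  have hs0 : (0:ℝ) < s := by linarith
  have hsx : s ≤ x := by nlinarith [Real.log_nonneg hx1]
  have hes : Real.exp s = Real.exp x / x ^ 2 := by
    rw [hs, Real.exp_sub, two_mul, Real.exp_add, Real.exp_log hx0, sq]
  have hi1 : IntervalIntegrable (fun z : ℝ => Real.exp z / z) volume 1 s := by
    apply (contOn_exp_div ?_).intervalIntegrable
    rw [Set.uIcc_of_le hs1]; intro z hz; linarith [hz.1]
  have hi2 : IntervalIntegrable (fun z : ℝ => Real.exp z / z) volume s x := by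
    apply (contOn_exp_div ?_).intervalIntegrable
    rw [Set.uIcc_of_le hsx]; intro z hz; linarith [hz.1]
  have hsplit : (∫ z in (1:ℝ)..x, Real.exp z / z)
      = (∫ z in (1:ℝ)..s, Real.exp z / z) + ∫ z in s..x, Real.exp z / z :=
    (integral_add_adjacent_intervals hi1 hi2).symm
  have h1 : (∫ z in (1:ℝ)..s, Real.exp z / z) ≤ Real.exp x / x ^ 2 := by
    have hb : (∫ z in (1:ℝ)..s, Real.exp z / z) ≤ ∫ z in (1:ℝ)..s, Real.exp z := by
      apply integral_mono_on hs1 hi1 (Real.continuous_exp.intervalIntegrable 1 s)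
      intro z hz
      exact div_le_self (Real.exp_pos z).le hz.1
    rw [integral_exp] at hb
    calc (∫ z in (1:ℝ)..s, Real.exp z / z) ≤ Real.exp s - Real.exp 1 := hb
      _ ≤ Real.exp s := by linarith [Real.exp_pos 1]
      _ = Real.exp x / x ^ 2 := hes
  have h2 : (∫ z in s..x, Real.exp z / z) ≤ Real.exp x / s := by
    have hb : (∫ z in s..x, Real.exp z / z) ≤ ∫ z in s..x, Real.exp z / s := by
      apply integral_mono_on hsx hi2
        ((Real.continuous_exp.div_const s).intervalIntegrable s x)
      intro z hz
      exact div_le_div_of_nonneg_left (Real.exp_pos z).le hs0 hz.1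
    rw [intervalIntegral.integral_div, integral_exp] at hb
    calc (∫ z in s..x, Real.exp z / z) ≤ (Real.exp x - Real.exp s) / s := hb
      _ ≤ Real.exp x / s :=
          (div_le_div_iff_of_pos_right hs0).mpr (by linarith [Real.exp_pos s])
  linarith [hsplit, h1, h2]

lemma E_lower {x : ℝ} (hx1 : 1 ≤ x) (hs1 : 1 ≤ x - 2 * Real.log x) :
    (Real.exp x - Real.exp x / x ^ 2) / x ≤ ∫ z in (1:ℝ)..x, Real.exp z / z := by
  set s := x - 2 * Real.log x with hs
  have hx0 : (0:ℝ) < x := by linarith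
  have hs0 : (0:ℝ) < s := by linarith
  have hsx : s ≤ x := by nlinarith [Real.log_nonneg hx1]
  have hes : Real.exp s = Real.exp x / x ^ 2 := by
    rw [hs, Real.exp_sub, two_mul, Real.exp_add, Real.exp_log hx0, sq]
  have hi1 : IntervalIntegrable (fun z : ℝ => Real.exp z / z) volume 1 s := by
    apply (contOn_exp_div ?_).intervalIntegrable
    rw [Set.uIcc_of_le hs1]; intro z hz; linarith [hz.1]
  have hi2 : IntervalIntegrable (fun z : ℝ => Real.exp z / z) volume s x := by
    apply (contOn_exp_div ?_).intervalIntegrable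
    rw [Set.uIcc_of_le hsx]; intro z hz; linarith [hz.1]
  have hsplit : (∫ z in (1:ℝ)..x, Real.exp z / z)
      = (∫ z in (1:ℝ)..s, Real.exp z / z) + ∫ z in s..x, Real.exp z / z :=
    (integral_add_adjacent_intervals hi1 hi2).symm
  have h1 : (0:ℝ) ≤ ∫ z in (1:ℝ)..s, Real.exp z / z := by
    apply integral_nonneg hs1
    intro z hz
    exact div_nonneg (Real.exp_pos z).le (by linarith [hz.1])
  have h2 : (Real.exp x - Real.exp s) / x ≤ ∫ z in s..x, Real.exp z / z := by
    have hb : (∫ z in s..x, Real.exp z / x) ≤ ∫ z in s..x, Real.exp z / z := by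
      apply integral_mono_on hsx ((Real.continuous_exp.div_const x).intervalIntegrable s x) hi2
      intro z hz
      exact div_le_div_of_nonneg_left (Real.exp_pos z).le (by linarith [hz.1]) hz.2
    rwa [intervalIntegral.integral_div, integral_exp] at hb
  rw [hsplit, ← hes]
  linarith

lemma E_tendsto :
    Tendsto (fun x : ℝ => x * Real.exp (-x) * ∫ z in (1:ℝ)..x, Real.exp z / z)
      atTop (nhds 1) := by
  have hlog0 : Tendsto (fun x : ℝ => Real.log x / x) atTop (nhds 0) :=
    Real.isLittleO_log_id_atTop.tendsto_div_nhds_zero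
  have hev : ∀ᶠ x : ℝ in atTop, 1 ≤ x - 2 * Real.log x := by
    have h4 := hlog0.eventually (eventually_le_nhds (show (0:ℝ) < 1/4 by norm_num))
    filter_upwards [h4, eventually_ge_atTop (4:ℝ)] with x hx hx4
    have hx0 : (0:ℝ) < x := by linarith
    have : Real.log x ≤ 1/4 * x := by
      have := (div_le_iff₀ hx0).mp hx; linarith
    linarith
  have hinv : Tendsto (fun x : ℝ => 1 / x) atTop (nhds 0) := by
    simpa [one_div] using tendsto_inv_atTop_zero
  have hlo : Tendsto (fun x : ℝ => 1 - 1 / x ^ 2) atTop (nhds 1) := by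
    have hsq : Tendsto (fun x : ℝ => x ^ 2) atTop atTop :=
      tendsto_pow_atTop two_ne_zero
    have h2 : Tendsto (fun x : ℝ => 1 / x ^ 2) atTop (nhds 0) := by
      simpa [one_div, Pi.inv_def] using hsq.inv_tendsto_atTop
    simpa using tendsto_const_nhds.sub h2
  have hup : Tendsto (fun x : ℝ => 1 / x + 1 / (1 - 2 * (Real.log x / x))) atTop (nhds 1) := by
    have hden : Tendsto (fun x : ℝ => 1 - 2 * (Real.log x / x)) atTop (nhds 1) := by
      simpa using tendsto_const_nhds.sub (hlog0.const_mul 2)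
    have h2 : Tendsto (fun x : ℝ => 1 / (1 - 2 * (Real.log x / x))) atTop (nhds 1) := by
      simpa [one_div] using hden.inv₀ one_ne_zero
    simpa using hinv.add h2
  refine tendsto_of_tendsto_of_tendsto_of_le_of_le' hlo hup ?_ ?_
  · filter_upwards [hev, eventually_ge_atTop (1:ℝ)] with x hs hx1
    have hE := E_lower hx1 hs
    have hx0 : (0:ℝ) < x := by linarith
    have key : x * Real.exp (-x) * ((Real.exp x - Real.exp x / x ^ 2) / x) = 1 - 1 / x ^ 2 := by
      rw [Real.exp_neg]
      field_simp
    calc 1 - 1 / x ^ 2 = x * Real.exp (-x) * ((Real.exp x - Real.exp x / x ^ 2) / x) := key.symm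
      _ ≤ x * Real.exp (-x) * ∫ z in (1:ℝ)..x, Real.exp z / z := by
          apply mul_le_mul_of_nonneg_left hE (by positivity)
  · filter_upwards [hev, eventually_ge_atTop (1:ℝ)] with x hs hx1
    have hE := E_upper hx1 hs
    have hx0 : (0:ℝ) < x := by linarith
    have hs0 : (0:ℝ) < x - 2 * Real.log x := by linarith
    have key : x * Real.exp (-x) * (Real.exp x / x ^ 2 + Real.exp x / (x - 2 * Real.log x))
        = 1 / x + 1 / (1 - 2 * (Real.log x / x)) := by
      have hrw : 1 - 2 * (Real.log x / x) = (x - 2 * Real.log x) / x := by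
        field_simp
      rw [hrw, one_div_div, Real.exp_neg]
      field_simp
    calc x * Real.exp (-x) * ∫ z in (1:ℝ)..x, Real.exp z / z
        ≤ x * Real.exp (-x) * (Real.exp x / x ^ 2 + Real.exp x / (x - 2 * Real.log x)) := by
          apply mul_le_mul_of_nonneg_left hE (by positivity)
      _ = 1 / x + 1 / (1 - 2 * (Real.log x / x)) := key

/-- `h¹(x) = e^{−x} g(x)/(1 − e^{−x})` is asymptotically `1/x` as `x → ∞`. -/
theorem h1_asymptotic :
    Tendsto (fun x : ℝ => x * (Real.exp (-x) * g x / (1 - Real.exp (-x)))) atTop (nhds 1) := by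
  have hT1 : Tendsto (fun x : ℝ => x * Real.exp (-x) * g 1) atTop (nhds 0) := by
    have := (Real.tendsto_pow_mul_exp_neg_atTop_nhds_zero 1).mul_const (g 1)
    simpa using this
  have hT2 : Tendsto (fun x : ℝ => x * Real.exp (-x) * Real.log x) atTop (nhds 0) := by
    have hp : Tendsto (fun x : ℝ => x ^ 2 * Real.exp (-x)) atTop (nhds 0) :=
      Real.tendsto_pow_mul_exp_neg_atTop_nhds_zero 2
    apply squeeze_zero_norm' ?_ hp
    filter_upwards [eventually_ge_atTop (1:ℝ)] with x hx1
    have hl : 0 ≤ Real.log x := Real.log_nonneg hx1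
    have hlx : Real.log x ≤ x := (Real.log_le_sub_one_of_pos (by linarith)).trans (by linarith)
    rw [Real.norm_eq_abs, abs_of_nonneg (by positivity)]
    calc x * Real.exp (-x) * Real.log x ≤ x * Real.exp (-x) * x := by
          apply mul_le_mul_of_nonneg_left hlx (by positivity)
      _ = x ^ 2 * Real.exp (-x) := by ring
  have hN : Tendsto (fun x : ℝ => x * Real.exp (-x) * g x) atTop (nhds 1) := by
    have hc := (hT1.sub hT2).add E_tendsto
    refine Tendsto.congr' ?_ (by simpa using hc)
    filter_upwards [eventually_ge_atTop (1:ℝ)] with x hx1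
    rw [g_eq_aux hx1]
    ring
  have hD : Tendsto (fun x : ℝ => 1 - Real.exp (-x)) atTop (nhds 1) := by
    simpa using tendsto_const_nhds.sub Real.tendsto_exp_neg_atTop_nhds_zero
  have hfull : Tendsto (fun x : ℝ => (x * Real.exp (-x) * g x) / (1 - Real.exp (-x)))
      atTop (nhds 1) := by
    simpa [Pi.div_def] using hN.div hD one_ne_zero
  exact hfull.congr fun x => by ring
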